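/- For any finite set N of agents, finite set M of indivisible items, normalized monotone valuation functions v_i, and any subset P ⊆ N with |P| = 1, there exists a complete allocation (A_1, ..., A_n) of M that is EFprior with respect to P. -/

import Mathlib

/-- `A` is a (complete) allocation of the item set `M` among `n` agents:
a partition of `M` into `n` (possibly empty) bundles. -/
def IsAllocation {ι : Type*} [DecidableEq ι] {n : ℕ} (M : Finset ι)
    (A : Fin n → Finset ι) : Prop :=
  (∀ i j : Fin n, i ≠ j → Disjoint (A i) (A j)) ∧ Finset.univ.biUnion A = M

/-- Envy-freeness up to one item. -/
def EF1 {ι : Type*} [DecidableEq ι] {n : ℕ} (v : Fin n → Finset ι → ℝ)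
    (A : Fin n → Finset ι) : Prop :=
  ∀ i j : Fin n, i ≠ j → A j = ∅ ∨ ∃ g ∈ A j, v i ((A j).erase g) ≤ v i (A i)

/-- Envy-freeness with prioritized agents `P`: EF1, and no agent in `P`
envies any agent outside `P`. -/
def EFprior {ι : Type*} [DecidableEq ι] {n : ℕ} (v : Fin n → Finset ι → ℝ)
    (A : Fin n → Finset ι) (P : Finset (Fin n)) : Prop :=
  EF1 v A ∧ ∀ i ∈ P, ∀ j ∉ P, v i (A j) ≤ v i (A i)

section Helpers

variable {ι : Type*} [DecidableEq ι] {n : ℕ} {M : Finset ι} {v : Fin n → Finset ι → ℝ}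

lemma bundle_subset {M' : Finset ι} {B : Fin n → Finset ι}
    (h : IsAllocation M' B) (i : Fin n) : B i ⊆ M' :=
  h.2 ▸ Finset.subset_biUnion_of_mem B (Finset.mem_univ i)

lemma alloc_perm {M' : Finset ι} {B : Fin n → Finset ι}
    (h : IsAllocation M' B) (ρ : Equiv.Perm (Fin n)) : IsAllocation M' (B ∘ ρ) := by
  constructor
  · intro i j hij
    exact h.1 (ρ i) (ρ j) (fun hc => hij (ρ.injective hc))
  · rw [← h.2]
    ext x
    simp only [Finset.mem_biUnion, Finset.mem_univ, true_and, Function.comp_apply]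
    constructor
    · rintro ⟨i, hi⟩; exact ⟨ρ i, hi⟩
    · rintro ⟨i, hi⟩; exact ⟨ρ.symm i, by simpa using hi⟩

lemma alloc_gift {M' : Finset ι} {B : Fin n → Finset ι}
    (h : IsAllocation M' B) {a : ι} (ha : a ∉ M') (c : Fin n) :
    IsAllocation (insert a M') (fun i => if i = c then insert a (B c) else B i) := by
  have hBs : ∀ i, B i ⊆ M' := bundle_subset h
  have haB : ∀ i, a ∉ B i := fun i hc => ha (hBs i hc)
  constructor
  · intro i j hij
    by_cases hic : i = c
    · have hjc : ¬ j = c := fun hc => hij (hic.trans hc.symm)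
      simp only [if_pos hic, if_neg hjc]
      rw [Finset.disjoint_insert_left]
      exact ⟨haB j, hic ▸ h.1 _ _ hij⟩
    · by_cases hjc : j = c
      · simp only [if_neg hic, if_pos hjc]
        rw [Finset.disjoint_insert_right]
        exact ⟨haB i, hjc ▸ h.1 _ _ hij⟩
      · simp only [if_neg hic, if_neg hjc]
        exact h.1 _ _ hij
  · ext x
    simp only [Finset.mem_biUnion, Finset.mem_univ, true_and, Finset.mem_insert]
    constructor
    · rintro ⟨i, hi⟩
      by_cases hic : i = c
      · rw [if_pos hic, Finset.mem_insert] at hi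
        rcases hi with h1 | h1
        · exact Or.inl h1
        · exact Or.inr (by rw [← h.2]; exact Finset.mem_biUnion.2 ⟨c, Finset.mem_univ c, h1⟩)
      · rw [if_neg hic] at hi
        exact Or.inr (by rw [← h.2]; exact Finset.mem_biUnion.2 ⟨i, Finset.mem_univ i, hi⟩)
    · rintro (h1 | h1)
      · exact ⟨c, by rw [if_pos rfl]; exact h1 ▸ Finset.mem_insert_self _ _⟩
      · rw [← h.2] at h1
        obtain ⟨i, _, hi⟩ := Finset.mem_biUnion.1 h1
        by_cases hic : i = c
        · exact ⟨c, by rw [if_pos rfl]; exact Finset.mem_insert_of_mem (hic ▸ hi)⟩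
        · exact ⟨i, by rw [if_neg hic]; exact hi⟩

lemma EF1_perm (hmono : ∀ i : Fin n, ∀ S T : Finset ι, T ⊆ S → S ⊆ M → v i T ≤ v i S)
    {B : Fin n → Finset ι} (hsub : ∀ i, B i ⊆ M) (hEF : EF1 v B)
    (ρ : Equiv.Perm (Fin n)) (himp : ∀ i, v i (B i) ≤ v i (B (ρ i))) :
    EF1 v (B ∘ ρ) := by
  intro i j hij
  show B (ρ j) = ∅ ∨ ∃ g ∈ B (ρ j), v i ((B (ρ j)).erase g) ≤ v i (B (ρ i))
  by_cases hje : B (ρ j) = ∅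
  · exact Or.inl hje
  right
  by_cases hic : i = ρ j
  · obtain ⟨h, hh⟩ := Finset.nonempty_iff_ne_empty.2 hje
    refine ⟨h, hh, ?_⟩
    calc v i ((B (ρ j)).erase h) ≤ v i (B (ρ j)) :=
          hmono i _ _ (Finset.erase_subset _ _) (hsub _)
      _ = v i (B i) := by rw [← hic]
      _ ≤ v i (B (ρ i)) := himp i
  · rcases hEF i (ρ j) hic with h | ⟨h, hh, hle⟩
    · exact absurd h hje
    · exact ⟨h, hh, hle.trans (himp i)⟩

lemma EF1_gift (hmono : ∀ i : Fin n, ∀ S T : Finset ι, T ⊆ S → S ⊆ M → v i T ≤ v i S)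
    {M' : Finset ι} (hM' : M' ⊆ M) {B : Fin n → Finset ι} (halloc : IsAllocation M' B)
    (hEF : EF1 v B) {a : ι} (haM : a ∈ M) (ha : a ∉ M') (c : Fin n)
    (hc : ∀ i, v i (B c) ≤ v i (B i)) :
    EF1 v (fun i => if i = c then insert a (B c) else B i) := by
  have hBs : ∀ i, B i ⊆ M := fun i => (bundle_subset halloc i).trans hM'
  have haB : a ∉ B c := fun hcon => ha (bundle_subset halloc c hcon)
  intro i j hij
  by_cases hjc : j = c
  · have hic : ¬ i = c := fun hc => hij (hc.trans hjc.symm)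
    right
    refine ⟨a, ?_, ?_⟩
    · show a ∈ if j = c then insert a (B c) else B j
      rw [if_pos hjc]; exact Finset.mem_insert_self _ _
    · simp only [if_pos hjc, if_neg hic, Finset.erase_insert haB]
      exact hjc ▸ hc i
  · simp only [if_neg hjc]
    rcases hEF i j hij with h | ⟨h, hh, hle⟩
    · exact Or.inl h
    · right
      refine ⟨h, hh, hle.trans ?_⟩
      by_cases hic : i = c
      · simp only [if_pos hic]
        rw [hic]
        exact hmono _ _ _ (Finset.subset_insert _ _) (Finset.insert_subset haM (hBs c))
      · simp [if_neg hic]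


lemma key_lemma (hmono : ∀ i : Fin n, ∀ S T : Finset ι, T ⊆ S → S ⊆ M → v i T ≤ v i S)
    (p : Fin n) {M' : Finset ι} (hM' : M' ⊆ M) {A0 : Fin n → Finset ι}
    (hA : IsAllocation M' A0) (hEF0 : EF1 v A0) (hp0 : ∀ j, v p (A0 j) ≤ v p (A0 p)) :
    ∃ B : Fin n → Finset ι, IsAllocation M' B ∧ EF1 v B ∧ (∀ j, v p (B j) ≤ v p (B p)) ∧
      ((∀ i, v i (B p) ≤ v i (B i)) ∨
        ∃ s : Fin n, ∃ ρ : Equiv.Perm (Fin n), s ≠ p ∧ (∀ i, v i (B s) ≤ v i (B i)) ∧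
          ρ p = s ∧ ∀ i, i ≠ p → v i (B i) ≤ v i (B (ρ i))) := by
  classical
  set F : Equiv.Perm (Fin n) → ℝ := fun τ => ∑ i, v i (A0 (τ i)) with hF
  set Pred : Equiv.Perm (Fin n) → Prop :=
    fun τ => EF1 v (A0 ∘ τ) ∧ ∀ j, v p (A0 (τ j)) ≤ v p (A0 (τ p)) with hPreddef
  have hone : Pred 1 := by
    constructor
    · intro i j hij; exact hEF0 i j hij
    · intro j; exact hp0 j
  obtain ⟨σ, hσmem, hσmax⟩ := Finset.exists_max_image (Finset.univ.filter Pred) F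
    ⟨1, Finset.mem_filter.2 ⟨Finset.mem_univ _, hone⟩⟩
  have hσPred : Pred σ := (Finset.mem_filter.1 hσmem).2
  set B : Fin n → Finset ι := A0 ∘ σ with hBdef
  have hBalloc : IsAllocation M' B := alloc_perm hA σ
  have hBEF : EF1 v B := hσPred.1
  have hBp : ∀ j, v p (B j) ≤ v p (B p) := hσPred.2
  have hBsub : ∀ i, B i ⊆ M := fun i => (bundle_subset hBalloc i).trans hM'
  refine ⟨B, hBalloc, hBEF, hBp, ?_⟩
  by_cases hpun : ∀ i, v i (B p) ≤ v i (B i)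
  · exact Or.inl hpun
  right
  set gfun : Fin n → Fin n :=
    fun x => if h : ∃ y, v y (B y) < v y (B x) then h.choose else x with hgdef
  have hgfun : ∀ x (h : ∃ y, v y (B y) < v y (B x)),
      v (gfun x) (B (gfun x)) < v (gfun x) (B x) := by
    intro x h
    simp only [hgdef, dif_pos h]
    exact h.choose_spec
  set f : ℕ → Fin n := fun k => gfun^[k] p with hfdef
  have hf0 : f 0 = p := rfl
  have hfs : ∀ k, f (k+1) = gfun (f k) := fun k => Function.iterate_succ_apply' gfun k p
  have hex : ∃ k, (¬ ∃ y, v y (B y) < v y (B (f k))) ∨ ∃ j, j < k ∧ f j = f k := by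
    obtain ⟨x, y, hxy, hfe⟩ := Finite.exists_ne_map_eq_of_infinite f
    rcases lt_or_gt_of_ne hxy with h | h
    · exact ⟨y, Or.inr ⟨x, h, hfe⟩⟩
    · exact ⟨x, Or.inr ⟨y, h, hfe.symm⟩⟩
  set l : ℕ := Nat.find hex with hldef
  have hl := Nat.find_spec hex
  rw [← hldef] at hl
  have hlmin : ∀ k, k < l → (∃ y, v y (B y) < v y (B (f k))) ∧ ∀ j, j < k → f j ≠ f k := by
    intro k hk
    have h := Nat.find_min hex hk
    push_neg at h
    exact h
  have hstep : ∀ t, t < l → v (f (t+1)) (B (f (t+1))) < v (f (t+1)) (B (f t)) := by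
    intro t ht
    rw [hfs]
    exact hgfun _ (hlmin t ht).1
  have hl0 : 0 < l := by
    rcases Nat.eq_zero_or_pos l with h | h
    · exfalso
      rw [h] at hl
      rcases hl with h1 | ⟨j, hj, _⟩
      · exact hpun fun i => not_lt.1 fun hc => h1 ⟨i, hc⟩
      · omega
    · exact h
  rcases hl with hun | ⟨j, hjl, hje⟩
  · -- path case
    have hinj' : ∀ a b, a < b → b ≤ l → f a ≠ f b := by
      intro a b hab hbl h
      rcases eq_or_lt_of_le hbl with rfl | hbl'
      · exact hun (h ▸ (hlmin a hab).1)
      · exact (hlmin b hbl').2 a hab h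
    set L : List (Fin n) := (List.range (l+1)).map (fun t => f (l - t)) with hLdef
    have hLlen : L.length = l + 1 := by simp [hLdef]
    have hLget : ∀ (i : ℕ) (hi : i < L.length), L[i] = f (l - i) := by
      intro i hi
      simp [hLdef]
    have hLnd : L.Nodup := by
      refine (List.nodup_range).map_on ?_
      intro x hx y hy hxy
      rw [List.mem_range] at hx hy
      by_contra hne
      rcases lt_or_gt_of_ne hne with h | h
      · exact hinj' (l - y) (l - x) (by omega) (by omega) hxy.symm
      · exact hinj' (l - x) (l - y) (by omega) (by omega) hxy
    set ρ : Equiv.Perm (Fin n) := L.formPerm with hρdef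
    have happ : ∀ t, t ≤ l → ρ (f t) = f (l - ((l - t + 1) % (l + 1))) := by
      intro t ht
      have h1 : (l - t) < L.length := by rw [hLlen]; omega
      have h2 : L[l - t] = f t := by rw [hLget _ h1]; congr 1; omega
      have h3 := List.formPerm_apply_getElem L hLnd (l - t) h1
      rw [h2] at h3
      rw [hρdef, h3, hLget _ (Nat.mod_lt _ (by rw [hLlen]; omega))]
      congr 2
      rw [hLlen]
    have hρp : ρ p = f l := by
      have h := happ 0 (Nat.zero_le l)
      rw [Nat.sub_zero, Nat.mod_self, Nat.sub_zero] at h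
      exact h
    have happ' : ∀ t, 0 < t → t ≤ l → ρ (f t) = f (t - 1) := by
      intro t ht0 htl
      have h := happ t htl
      rw [Nat.mod_eq_of_lt (by omega)] at h
      have e2 : l - (l - t + 1) = t - 1 := by omega
      rw [e2] at h
      exact h
    have hflp : f l ≠ p := by
      intro h
      have hex2 : ∃ y, v y (B y) < v y (B p) := by
        push_neg at hpun
        obtain ⟨i, hi⟩ := hpun
        exact ⟨i, hi⟩
      apply hun
      rw [h]
      exact hex2
    refine ⟨f l, ρ, hflp, fun i => not_lt.1 fun hc => hun ⟨i, hc⟩, hρp, ?_⟩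
    intro i hip
    by_cases hiL : i ∈ L
    · obtain ⟨t, htmem, hti⟩ := List.mem_map.1 hiL
      rw [List.mem_range] at htmem
      have hul : l - t ≤ l := by omega
      have hu0 : 0 < l - t := by
        rcases Nat.eq_zero_or_pos (l - t) with h0 | h0
        · exfalso
          apply hip
          rw [← hti, h0, hf0]
        · exact h0
      rw [← hti]
      rw [happ' (l - t) hu0 hul]
      have h := hstep (l - t - 1) (by omega)
      rw [Nat.sub_add_cancel hu0] at h
      exact le_of_lt h
    · rw [show ρ i = i from List.formPerm_apply_of_notMem hiL]
  · -- cycle case : contradiction with maximality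
    exfalso
    have hinj : ∀ a b, a < b → b < l → f a ≠ f b := fun a b hab hbl => (hlmin b hbl).2 a hab
    have hjl2 : j + 2 ≤ l := by
      by_contra h
      have hl1 : j + 1 = l := by omega
      have h2 := hstep j hjl
      rw [hl1, ← hje] at h2
      exact lt_irrefl _ h2
    have hj0 : 0 < j := by
      rcases Nat.eq_zero_or_pos j with h0 | h0
      · exfalso
        have h2 := hstep (l-1) (by omega)
        rw [Nat.sub_add_cancel (by omega : 1 ≤ l)] at h2
        rw [← hje, h0] at h2
        exact absurd h2 (not_lt.2 (hBp (f (l-1))))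
      · exact h0
    set m : ℕ := l - j with hmdef
    have hm2 : 2 ≤ m := by omega
    set L : List (Fin n) := (List.range m).map (fun t => f (l - 1 - t)) with hLdef
    have hLlen : L.length = m := by simp [hLdef]
    have hLget : ∀ (i : ℕ) (hi : i < L.length), L[i] = f (l - 1 - i) := by
      intro i hi
      simp [hLdef]
    have hLnd : L.Nodup := by
      refine (List.nodup_range).map_on ?_
      intro x hx y hy hxy
      rw [List.mem_range] at hx hy
      by_contra hne
      rcases lt_or_gt_of_ne hne with h | h
      · exact hinj (l - 1 - y) (l - 1 - x) (by omega) (by omega) hxy.symm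
      · exact hinj (l - 1 - x) (l - 1 - y) (by omega) (by omega) hxy
    set ρ : Equiv.Perm (Fin n) := L.formPerm with hρdef
    have happ : ∀ t, j ≤ t → t < l → ρ (f t) = f (l - 1 - ((l - 1 - t + 1) % m)) := by
      intro t htj htl
      have h1 : (l - 1 - t) < L.length := by rw [hLlen]; omega
      have h2 : L[l - 1 - t] = f t := by rw [hLget _ h1]; congr 1; omega
      have h3 := List.formPerm_apply_getElem L hLnd (l - 1 - t) h1
      rw [h2] at h3
      rw [hρdef, h3, hLget _ (Nat.mod_lt _ (by rw [hLlen]; omega))]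
      congr 2
      rw [hLlen]
    have happj : ρ (f j) = f (l - 1) := by
      have h := happ j (le_refl j) (by omega)
      have e : (l - 1 - j + 1) % m = 0 := by
        have : l - 1 - j + 1 = m := by omega
        rw [this, Nat.mod_self]
      rw [e, Nat.sub_zero] at h
      exact h
    have happ' : ∀ t, j < t → t < l → ρ (f t) = f (t - 1) := by
      intro t htj htl
      have h := happ t (le_of_lt htj) htl
      rw [Nat.mod_eq_of_lt (by omega)] at h
      have e2 : l - 1 - (l - 1 - t + 1) = t - 1 := by omega
      rw [e2] at h
      exact h
    have hstrict : v (f j) (B (f j)) < v (f j) (B (ρ (f j))) := by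
      rw [happj]
      have h := hstep (l-1) (by omega)
      rw [Nat.sub_add_cancel (by omega : 1 ≤ l), ← hje] at h
      exact h
    have himpall : ∀ i, v i (B i) ≤ v i (B (ρ i)) := by
      intro i
      by_cases hiL : i ∈ L
      · obtain ⟨x, hxmem, hxi⟩ := List.mem_map.1 hiL
        rw [List.mem_range] at hxmem
        have htj : j ≤ l - 1 - x := by omega
        have htl : l - 1 - x < l := by omega
        rw [← hxi]
        rcases eq_or_lt_of_le htj with heq | htj'
        · rw [← heq]
          exact le_of_lt hstrict
        · rw [happ' (l - 1 - x) htj' htl]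
          have h := hstep (l - 1 - x - 1) (by omega)
          rw [Nat.sub_add_cancel (by omega : 1 ≤ l - 1 - x)] at h
          exact le_of_lt h
      · rw [show ρ i = i from List.formPerm_apply_of_notMem hiL]
    have hρp : ρ p = p := by
      have hpL : p ∉ L := by
        intro hc
        obtain ⟨x, hxmem, hxi⟩ := List.mem_map.1 hc
        rw [List.mem_range] at hxmem
        exact hinj 0 (l - 1 - x) (by omega) (by omega) (hf0.trans hxi.symm)
      exact List.formPerm_apply_of_notMem hpL
    have hPred2 : Pred (ρ.trans σ) := by
      constructor
      · show EF1 v (A0 ∘ ⇑(ρ.trans σ))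
        have hcomp : A0 ∘ ⇑(ρ.trans σ) = B ∘ ⇑ρ := rfl
        rw [hcomp]
        exact EF1_perm hmono hBsub hBEF ρ himpall
      · intro q
        show v p (B (ρ q)) ≤ v p (B (ρ p))
        rw [hρp]
        exact hBp _
    have hle := hσmax (ρ.trans σ) (Finset.mem_filter.2 ⟨Finset.mem_univ _, hPred2⟩)
    have hlt : F σ < F (ρ.trans σ) := by
      show (∑ i, v i (A0 (σ i))) < ∑ i, v i (A0 (σ (ρ i)))
      exact Finset.sum_lt_sum (fun i _ => himpall i) ⟨f j, Finset.mem_univ _, hstrict⟩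
    exact absurd hle (not_le.2 hlt)


lemma exists_good_alloc (hmono : ∀ i : Fin n, ∀ S T : Finset ι, T ⊆ S → S ⊆ M → v i T ≤ v i S)
    (p : Fin n) :
    ∀ M' : Finset ι, M' ⊆ M →
      ∃ B : Fin n → Finset ι, IsAllocation M' B ∧ EF1 v B ∧ ∀ j, v p (B j) ≤ v p (B p) := by
  intro M'
  induction M' using Finset.induction_on with
  | empty =>
    intro _
    exact ⟨fun _ => ∅, ⟨fun i j _ => Finset.disjoint_empty_left _, by ext x; simp⟩,
      fun i j _ => Or.inl rfl, fun j => le_refl _⟩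
  | @insert a s hans ih =>
    intro hsub
    have hsM : s ⊆ M := (Finset.subset_insert a s).trans hsub
    have haM : a ∈ M := hsub (Finset.mem_insert_self a s)
    obtain ⟨A0, hA, hEF, hp⟩ := ih hsM
    obtain ⟨B, hBalloc, hBEF, hBp, hkey⟩ := key_lemma hmono p hsM hA hEF hp
    have hBsubM : ∀ i, B i ⊆ M := fun i => (bundle_subset hBalloc i).trans hsM
    have haB : ∀ i, a ∉ B i := fun i hc => hans (bundle_subset hBalloc i hc)
    rcases hkey with hpun | ⟨s0, ρ, hs0p, hs0un, hρp, himp⟩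
    · -- give the new item to p
      refine ⟨fun i => if i = p then insert a (B p) else B i,
        alloc_gift hBalloc hans p, EF1_gift hmono hsM hBalloc hBEF haM hans p hpun, ?_⟩
      intro j
      show v p (if j = p then insert a (B p) else B j) ≤
        v p (if p = p then insert a (B p) else B p)
      rw [if_pos rfl]
      by_cases hjp : j = p
      · rw [if_pos hjp]
      · rw [if_neg hjp]
        exact (hBp j).trans
          (hmono p _ _ (Finset.subset_insert _ _) (Finset.insert_subset haM (hBsubM p)))
    · by_cases hcase : v p (insert a (B s0)) ≤ v p (B p)
      · -- give the new item to the unenvied agent s0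
        refine ⟨fun i => if i = s0 then insert a (B s0) else B i,
          alloc_gift hBalloc hans s0, EF1_gift hmono hsM hBalloc hBEF haM hans s0 hs0un, ?_⟩
        intro j
        have hps0 : ¬ p = s0 := fun h => hs0p h.symm
        show v p (if j = s0 then insert a (B s0) else B j) ≤
          v p (if p = s0 then insert a (B s0) else B p)
        rw [if_neg hps0]
        by_cases hjs : j = s0
        · rw [if_pos hjs]; exact hcase
        · rw [if_neg hjs]; exact hBp j
      · -- rotate bundles along the envy path, then give the new item to p
        push_neg at hcase
        set C : Fin n → Finset ι := fun i => if i = p then insert a (B s0) else B (ρ i)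
          with hCdef
        have hBρ : IsAllocation s (B ∘ ⇑ρ) := alloc_perm hBalloc ρ
        have halloC : IsAllocation (insert a s) C := by
          have hfe : C = fun i => if i = p then insert a ((B ∘ ⇑ρ) p) else (B ∘ ⇑ρ) i := by
            funext i
            show (if i = p then insert a (B s0) else B (ρ i)) =
              if i = p then insert a ((B ∘ ⇑ρ) p) else (B ∘ ⇑ρ) i
            simp only [Function.comp_apply, hρp]
          rw [hfe]
          exact alloc_gift hBρ hans p
        have hCp : ∀ j, v p (C j) ≤ v p (C p) := by
          intro j
          by_cases hjp : j = p
          · rw [hjp]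
          · show v p (if j = p then insert a (B s0) else B (ρ j)) ≤
              v p (if p = p then insert a (B s0) else B (ρ p))
            rw [if_neg hjp, if_pos rfl]
            exact (hBp (ρ j)).trans (le_of_lt hcase)
        have hEFC : EF1 v C := by
          intro i q hiq
          by_cases hqp : q = p
          · right
            have hip : ¬ i = p := fun h => hiq (h.trans hqp.symm)
            refine ⟨a, ?_, ?_⟩
            · show a ∈ if q = p then insert a (B s0) else B (ρ q)
              rw [if_pos hqp]
              exact Finset.mem_insert_self _ _
            · show v i ((if q = p then insert a (B s0) else B (ρ q)).erase a) ≤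
                v i (if i = p then insert a (B s0) else B (ρ i))
              rw [if_pos hqp, if_neg hip, Finset.erase_insert (haB s0)]
              exact (hs0un i).trans (himp i hip)
          · by_cases hqe : B (ρ q) = ∅
            · left
              show (if q = p then insert a (B s0) else B (ρ q)) = ∅
              rw [if_neg hqp]
              exact hqe
            right
            by_cases hip : i = p
            · obtain ⟨h, hh⟩ := Finset.nonempty_iff_ne_empty.2 hqe
              refine ⟨h, ?_, ?_⟩
              · show h ∈ if q = p then insert a (B s0) else B (ρ q)
                rw [if_neg hqp]
                exact hh
              · show v i ((if q = p then insert a (B s0) else B (ρ q)).erase h) ≤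
                  v i (if i = p then insert a (B s0) else B (ρ i))
                rw [if_neg hqp, if_pos hip, hip]
                calc v p ((B (ρ q)).erase h) ≤ v p (B (ρ q)) :=
                      hmono p _ _ (Finset.erase_subset _ _) (hBsubM _)
                  _ ≤ v p (B p) := hBp _
                  _ ≤ v p (insert a (B s0)) := le_of_lt hcase
            · by_cases hir : i = ρ q
              · obtain ⟨h, hh⟩ := Finset.nonempty_iff_ne_empty.2 hqe
                refine ⟨h, ?_, ?_⟩
                · show h ∈ if q = p then insert a (B s0) else B (ρ q)
                  rw [if_neg hqp]
                  exact hh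
                · show v i ((if q = p then insert a (B s0) else B (ρ q)).erase h) ≤
                    v i (if i = p then insert a (B s0) else B (ρ i))
                  rw [if_neg hqp, if_neg hip]
                  calc v i ((B (ρ q)).erase h) ≤ v i (B (ρ q)) :=
                        hmono i _ _ (Finset.erase_subset _ _) (hBsubM _)
                    _ = v i (B i) := by rw [← hir]
                    _ ≤ v i (B (ρ i)) := himp i hip
              · rcases hBEF i (ρ q) hir with h | ⟨h, hh, hle⟩
                · exact absurd h hqe
                · refine ⟨h, ?_, ?_⟩
                  · show h ∈ if q = p then insert a (B s0) else B (ρ q)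
                    rw [if_neg hqp]
                    exact hh
                  · show v i ((if q = p then insert a (B s0) else B (ρ q)).erase h) ≤
                      v i (if i = p then insert a (B s0) else B (ρ i))
                    rw [if_neg hqp, if_neg hip]
                    exact hle.trans (himp i hip)
        exact ⟨C, halloC, hEFC, hCp⟩

end Helpers

/-- If there is exactly one prioritized agent, an EFprior allocation
always exists. -/
theorem efprior_exists_single_P {ι : Type*} [DecidableEq ι] (n : ℕ) (M : Finset ι)
    (v : Fin n → Finset ι → ℝ)
    (hnorm : ∀ i : Fin n, v i ∅ = 0)
    (hnonneg : ∀ i : Fin n, ∀ S ⊆ M, 0 ≤ v i S)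
    (hmono : ∀ i : Fin n, ∀ S T : Finset ι, T ⊆ S → S ⊆ M → v i T ≤ v i S)
    (P : Finset (Fin n))
    (hP : P.card = 1) :
    ∃ A : Fin n → Finset ι, IsAllocation M A ∧ EFprior v A P := by
  obtain ⟨p, hPp⟩ := Finset.card_eq_one.1 hP
  obtain ⟨B, hall, hef, hpp⟩ := exists_good_alloc (M := M) (v := v) hmono p M (subset_refl M)
  refine ⟨B, hall, hef, ?_⟩
  intro i hi j _
  rw [hPp, Finset.mem_singleton] at hi
  subst hi
  exact hpp j
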